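/- For every real β > 0 and every natural number k ≠ 1, the series Σ_{l=0}^{∞} q(β,k,l) converges absolutely; writing Q(β,k) for its sum, one has Q(β+1,k) = ((2β+k+1)/(4(2β+k+4))) · Q(β,k). -/

import Mathlib

/-- The Zeilberger summand
`q(β,k,l) = ((2l)!/(2l−1)) (β+k+2l) Γ(β+k+l+1)² /
  ((k+2l−1)(2β+k+2l+1)(β+k+l) Γ(2β+2k+2l+2) (l!)²)`. -/
noncomputable def qZeil (β : ℝ) (k l : ℕ) : ℝ :=
  ((Nat.factorial (2 * l) : ℝ) / (2 * (l : ℝ) - 1)) * (β + (k : ℝ) + 2 * (l : ℝ)) *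
    (Real.Gamma (β + (k : ℝ) + (l : ℝ) + 1)) ^ 2 /
    (((k : ℝ) + 2 * (l : ℝ) - 1) * (2 * β + (k : ℝ) + 2 * (l : ℝ) + 1) *
      (β + (k : ℝ) + (l : ℝ)) * Real.Gamma (2 * β + 2 * (k : ℝ) + 2 * (l : ℝ) + 2) *
      (Nat.factorial l : ℝ) ^ 2)

/-- The hypergeometric kernel `h(l) = (2l)! Γ(β+k+l+1)² / (Γ(2β+2k+2l+2) (l!)²)`. -/
noncomputable def hZeil (β : ℝ) (k l : ℕ) : ℝ :=
  (Nat.factorial (2 * l) : ℝ) * (Real.Gamma (β + (k : ℝ) + (l : ℝ) + 1)) ^ 2 /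
    (Real.Gamma (2 * β + 2 * (k : ℝ) + 2 * (l : ℝ) + 2) * (Nat.factorial l : ℝ) ^ 2)

/-- The Zeilberger certificate `G(l) = -l h(l) / ((2l-1)(2β+k+2l+1)(β+k+l))`. -/
noncomputable def gZeil (β : ℝ) (k l : ℕ) : ℝ :=
  -(l : ℝ) * hZeil β k l /
    ((2 * (l : ℝ) - 1) * (2 * β + (k : ℝ) + 2 * (l : ℝ) + 1) * (β + (k : ℝ) + (l : ℝ)))

lemma hZeil_pos (β : ℝ) (hβ : 0 < β) (k l : ℕ) : 0 < hZeil β k l := by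
  have hA : 0 < Real.Gamma (β + (k : ℝ) + (l : ℝ) + 1) :=
    Real.Gamma_pos_of_pos (by positivity)
  have hB : 0 < Real.Gamma (2 * β + 2 * (k : ℝ) + 2 * (l : ℝ) + 2) :=
    Real.Gamma_pos_of_pos (by positivity)
  have hF : (0:ℝ) < (Nat.factorial (2 * l) : ℝ) := by exact_mod_cast Nat.factorial_pos _
  have hf : (0:ℝ) < (Nat.factorial l : ℝ) := by exact_mod_cast Nat.factorial_pos _
  unfold hZeil
  positivity

lemma hZeil_succ (β : ℝ) (hβ : 0 < β) (k l : ℕ) :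
    hZeil β k (l + 1) =
      ((2 * (l:ℝ) + 1) * (β + (k:ℝ) + (l:ℝ) + 1)) /
        (((l:ℝ) + 1) * (2 * β + 2 * (k:ℝ) + 2 * (l:ℝ) + 3)) * hZeil β k l := by
  have hA : (β + (k:ℝ) + (l:ℝ) + 1) ≠ 0 := by positivity
  have hB2 : (2 * β + 2 * (k:ℝ) + 2 * (l:ℝ) + 2) ≠ 0 := by positivity
  have hB3 : (2 * β + 2 * (k:ℝ) + 2 * (l:ℝ) + 3) ≠ 0 := by positivity
  have gA : Real.Gamma (β + (k:ℝ) + ((l:ℝ) + 1) + 1)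
      = (β + (k:ℝ) + (l:ℝ) + 1) * Real.Gamma (β + (k:ℝ) + (l:ℝ) + 1) := by
    rw [show β + (k:ℝ) + ((l:ℝ) + 1) + 1 = (β + (k:ℝ) + (l:ℝ) + 1) + 1 by ring,
      Real.Gamma_add_one hA]
  have gB : Real.Gamma (2 * β + 2 * (k:ℝ) + 2 * ((l:ℝ) + 1) + 2)
      = (2 * β + 2 * (k:ℝ) + 2 * (l:ℝ) + 3) *
        ((2 * β + 2 * (k:ℝ) + 2 * (l:ℝ) + 2) *
          Real.Gamma (2 * β + 2 * (k:ℝ) + 2 * (l:ℝ) + 2)) := by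
    rw [show 2 * β + 2 * (k:ℝ) + 2 * ((l:ℝ) + 1) + 2
        = (2 * β + 2 * (k:ℝ) + 2 * (l:ℝ) + 3) + 1 by ring, Real.Gamma_add_one hB3,
      show 2 * β + 2 * (k:ℝ) + 2 * (l:ℝ) + 3
        = (2 * β + 2 * (k:ℝ) + 2 * (l:ℝ) + 2) + 1 by ring, Real.Gamma_add_one hB2]
  have eF : Nat.factorial (2 * (l + 1)) = (2*l+2) * ((2*l+1) * Nat.factorial (2*l)) := by
    rw [show 2 * (l + 1) = (2*l+1)+1 by ring, Nat.factorial_succ, Nat.factorial_succ]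
  have hBpos : 0 < Real.Gamma (2 * β + 2 * (k:ℝ) + 2 * (l:ℝ) + 2) :=
    Real.Gamma_pos_of_pos (by positivity)
  have hf : ((Nat.factorial l : ℝ)) ≠ 0 := by
    exact_mod_cast (Nat.factorial_pos l).ne'
  unfold hZeil
  rw [eF]
  push_cast
  rw [gA, gB, Nat.factorial_succ]
  push_cast
  have hl1 : ((l:ℝ) + 1) ≠ 0 := by positivity
  field_simp

lemma hZeil_succ_le (β : ℝ) (hβ : 0 < β) (k l : ℕ) : hZeil β k (l + 1) ≤ hZeil β k l := by
  rw [hZeil_succ β hβ k l]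
  have hpos := hZeil_pos β hβ k l
  have hden : (0:ℝ) < ((l:ℝ) + 1) * (2 * β + 2 * (k:ℝ) + 2 * (l:ℝ) + 3) := by positivity
  have hcoef : ((2 * (l:ℝ) + 1) * (β + (k:ℝ) + (l:ℝ) + 1)) /
      (((l:ℝ) + 1) * (2 * β + 2 * (k:ℝ) + 2 * (l:ℝ) + 3)) ≤ 1 := by
    rw [div_le_one hden]
    have hk0 : (0:ℝ) ≤ (k:ℝ) := Nat.cast_nonneg k
    have hl0 : (0:ℝ) ≤ (l:ℝ) := Nat.cast_nonneg l
    nlinarith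
  calc ((2 * (l:ℝ) + 1) * (β + (k:ℝ) + (l:ℝ) + 1)) /
      (((l:ℝ) + 1) * (2 * β + 2 * (k:ℝ) + 2 * (l:ℝ) + 3)) * hZeil β k l
      ≤ 1 * hZeil β k l := by
        apply mul_le_mul_of_nonneg_right hcoef hpos.le
    _ = hZeil β k l := one_mul _

lemma hZeil_le_zero (β : ℝ) (hβ : 0 < β) (k l : ℕ) : hZeil β k l ≤ hZeil β k 0 := by
  induction l with
  | zero => exact le_refl _
  | succ n ih => exact (hZeil_succ_le β hβ k n).trans ih

lemma aux_ne (β : ℝ) (hβ : 0 < β) (k : ℕ) (hk : k ≠ 1) (l : ℕ) :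
    (2 * (l:ℝ) - 1) ≠ 0 ∧ ((k:ℝ) + 2 * (l:ℝ) - 1) ≠ 0 := by
  constructor
  · rcases l with _ | m
    · norm_num
    · have : (0:ℝ) ≤ (m:ℝ) := Nat.cast_nonneg m
      push_cast
      nlinarith
  · have hne : k + 2 * l ≠ 1 := by omega
    have : ((k + 2*l : ℕ) : ℝ) ≠ 1 := by exact_mod_cast hne
    push_cast at this
    intro h; apply this; linarith

lemma q_as_h (β : ℝ) (hβ : 0 < β) (k : ℕ) (hk : k ≠ 1) (l : ℕ) :
    qZeil β k l = (β + (k:ℝ) + 2 * (l:ℝ)) /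
      ((2 * (l:ℝ) - 1) * ((k:ℝ) + 2 * (l:ℝ) - 1) * (2 * β + (k:ℝ) + 2 * (l:ℝ) + 1) *
        (β + (k:ℝ) + (l:ℝ))) * hZeil β k l := by
  obtain ⟨h2l, hk2l⟩ := aux_ne β hβ k hk l
  have hk0 : (0:ℝ) ≤ (k:ℝ) := Nat.cast_nonneg k
  have hl0 : (0:ℝ) ≤ (l:ℝ) := Nat.cast_nonneg l
  have h1 : (2 * β + (k:ℝ) + 2 * (l:ℝ) + 1) ≠ 0 := by positivity
  have h4 : (β + (k:ℝ) + (l:ℝ)) ≠ 0 := by positivity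
  have hB : Real.Gamma (2 * β + 2 * (k:ℝ) + 2 * (l:ℝ) + 2) ≠ 0 :=
    (Real.Gamma_pos_of_pos (by positivity)).ne'
  have hf : ((Nat.factorial l : ℝ)) ≠ 0 := by exact_mod_cast (Nat.factorial_pos l).ne'
  unfold qZeil hZeil
  field_simp

lemma q1_as_h (β : ℝ) (hβ : 0 < β) (k : ℕ) (hk : k ≠ 1) (l : ℕ) :
    qZeil (β + 1) k l = ((β + (k:ℝ) + 2 * (l:ℝ) + 1) * (β + (k:ℝ) + (l:ℝ) + 1) ^ 2) /
      ((2 * (l:ℝ) - 1) * ((k:ℝ) + 2 * (l:ℝ) - 1) * (2 * β + (k:ℝ) + 2 * (l:ℝ) + 3) *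
        (β + (k:ℝ) + (l:ℝ) + 1) * (2 * β + 2 * (k:ℝ) + 2 * (l:ℝ) + 3) *
        (2 * β + 2 * (k:ℝ) + 2 * (l:ℝ) + 2)) * hZeil β k l := by
  have hA : (β + (k:ℝ) + (l:ℝ) + 1) ≠ 0 := by positivity
  have hB2 : (2 * β + 2 * (k:ℝ) + 2 * (l:ℝ) + 2) ≠ 0 := by positivity
  have hB3 : (2 * β + 2 * (k:ℝ) + 2 * (l:ℝ) + 3) ≠ 0 := by positivity
  have gA : Real.Gamma (β + 1 + (k:ℝ) + (l:ℝ) + 1)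
      = (β + (k:ℝ) + (l:ℝ) + 1) * Real.Gamma (β + (k:ℝ) + (l:ℝ) + 1) := by
    rw [show β + 1 + (k:ℝ) + (l:ℝ) + 1 = (β + (k:ℝ) + (l:ℝ) + 1) + 1 by ring,
      Real.Gamma_add_one hA]
  have gB : Real.Gamma (2 * (β + 1) + 2 * (k:ℝ) + 2 * (l:ℝ) + 2)
      = (2 * β + 2 * (k:ℝ) + 2 * (l:ℝ) + 3) *
        ((2 * β + 2 * (k:ℝ) + 2 * (l:ℝ) + 2) *
          Real.Gamma (2 * β + 2 * (k:ℝ) + 2 * (l:ℝ) + 2)) := by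
    rw [show 2 * (β + 1) + 2 * (k:ℝ) + 2 * (l:ℝ) + 2
        = (2 * β + 2 * (k:ℝ) + 2 * (l:ℝ) + 3) + 1 by ring, Real.Gamma_add_one hB3,
      show 2 * β + 2 * (k:ℝ) + 2 * (l:ℝ) + 3
        = (2 * β + 2 * (k:ℝ) + 2 * (l:ℝ) + 2) + 1 by ring, Real.Gamma_add_one hB2]
  obtain ⟨h2l, hk2l⟩ := aux_ne β hβ k hk l
  have hk0 : (0:ℝ) ≤ (k:ℝ) := Nat.cast_nonneg k
  have hl0 : (0:ℝ) ≤ (l:ℝ) := Nat.cast_nonneg l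
  have h3 : (2 * β + (k:ℝ) + 2 * (l:ℝ) + 3) ≠ 0 := by positivity
  have h5 : (β + (k:ℝ) + (l:ℝ) + 1) ≠ 0 := by positivity
  have hBpos : (0:ℝ) < Real.Gamma (2 * β + 2 * (k:ℝ) + 2 * (l:ℝ) + 2) :=
    Real.Gamma_pos_of_pos (by positivity)
  have hf : ((Nat.factorial l : ℝ)) ≠ 0 := by exact_mod_cast (Nat.factorial_pos l).ne'
  unfold qZeil hZeil
  rw [gA, gB]
  field_simp
  ring

set_option maxHeartbeats 4000000 in
lemma tele_alg (β c t H : ℝ)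
    (h2l : (2*t-1) ≠ 0) (hk2l : (c+2*t-1) ≠ 0)
    (h1 : (2*β+c+2*t+1) ≠ 0) (h3 : (2*β+c+2*t+3) ≠ 0)
    (h4 : (β+c+t) ≠ 0) (h5 : (β+c+t+1) ≠ 0)
    (h6 : (2*β+2*c+2*t+2) ≠ 0) (h7 : (2*β+2*c+2*t+3) ≠ 0)
    (h8 : (t+1) ≠ 0)
    (h10 : (2*(t+1)-1) ≠ 0) (h11 : (2*β+c+2*(t+1)+1) ≠ 0) (h12 : (β+c+(t+1)) ≠ 0) :
    4 * (2 * β + c + 4) *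
        ((β + c + 2 * t + 1) * (β + c + t + 1) ^ 2 /
            ((2 * t - 1) * (c + 2 * t - 1) * (2 * β + c + 2 * t + 3) * (β + c + t + 1) *
                (2 * β + 2 * c + 2 * t + 3) *
              (2 * β + 2 * c + 2 * t + 2)) *
          H) -
      (2 * β + c + 1) *
        ((β + c + 2 * t) / ((2 * t - 1) * (c + 2 * t - 1) * (2 * β + c + 2 * t + 1) * (β + c + t)) *
          H) =
    -(t + 1) * ((2 * t + 1) * (β + c + t + 1) / ((t + 1) * (2 * β + 2 * c + 2 * t + 3)) * H) /
        ((2 * (t + 1) - 1) * (2 * β + c + 2 * (t + 1) + 1) * (β + c + (t + 1))) -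
      -t * H / ((2 * t - 1) * (2 * β + c + 2 * t + 1) * (β + c + t)) := by
  generalize hD : 2*β+2*c+2*t+3 = D at *
  field_simp
  subst hD
  ring

/-- The telescoping (Zeilberger) identity. -/
lemma tele (β : ℝ) (hβ : 0 < β) (k : ℕ) (hk : k ≠ 1) (l : ℕ) :
    4 * (2 * β + (k:ℝ) + 4) * qZeil (β + 1) k l - (2 * β + (k:ℝ) + 1) * qZeil β k l
      = gZeil β k (l + 1) - gZeil β k l := by
  have h2l : (2 * (l:ℝ) - 1) ≠ 0 := by
    rcases l with _ | m
    · norm_num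
    · have : (0:ℝ) ≤ (m:ℝ) := Nat.cast_nonneg m
      push_cast
      nlinarith
  have hk2l : ((k:ℝ) + 2 * (l:ℝ) - 1) ≠ 0 := by
    have hne : k + 2 * l ≠ 1 := by omega
    have : ((k + 2*l : ℕ) : ℝ) ≠ 1 := by exact_mod_cast hne
    push_cast at this
    intro h; apply this; linarith
  have hk0 : (0:ℝ) ≤ (k:ℝ) := Nat.cast_nonneg k
  have hl0 : (0:ℝ) ≤ (l:ℝ) := Nat.cast_nonneg l
  have h1 : (2 * β + (k:ℝ) + 2 * (l:ℝ) + 1) ≠ 0 := by positivity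
  have h3 : (2 * β + (k:ℝ) + 2 * (l:ℝ) + 3) ≠ 0 := by positivity
  have h4 : (β + (k:ℝ) + (l:ℝ)) ≠ 0 := by positivity
  have h5 : (β + (k:ℝ) + (l:ℝ) + 1) ≠ 0 := by positivity
  have h6 : (2 * β + 2 * (k:ℝ) + 2 * (l:ℝ) + 2) ≠ 0 := by positivity
  have h7 : (2 * β + 2 * (k:ℝ) + 2 * (l:ℝ) + 3) ≠ 0 := by positivity
  have h8 : ((l:ℝ) + 1) ≠ 0 := by positivity
  have h9 : (2 * (l:ℝ) + 1) ≠ 0 := by positivity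
  have h10 : (2 * ((l:ℝ) + 1) - 1) ≠ 0 := ne_of_gt (by linarith)
  have h11 : (2 * β + (k:ℝ) + 2 * ((l:ℝ) + 1) + 1) ≠ 0 := ne_of_gt (by linarith)
  have h12 : (β + (k:ℝ) + ((l:ℝ) + 1)) ≠ 0 := ne_of_gt (by linarith)
  rw [q_as_h β hβ k hk, q1_as_h β hβ k hk]
  unfold gZeil
  push_cast
  rw [hZeil_succ β hβ k l]
  exact tele_alg β (k:ℝ) (l:ℝ) (hZeil β k l) h2l hk2l h1 h3 h4 h5 h6 h7 h8 h10 h11 h12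

lemma gZeil_zero (β : ℝ) (k : ℕ) : gZeil β k 0 = 0 := by
  simp [gZeil]

/-- Summability of `|q|`. -/
lemma summable_abs_q (β : ℝ) (hβ : 0 < β) (k : ℕ) (hk : k ≠ 1) :
    Summable (fun l : ℕ => |qZeil β k l|) := by
  rw [← summable_nat_add_iff 1]
  have h0pos := hZeil_pos β hβ k 0
  have S2 : Summable (fun n : ℕ => hZeil β k 0 * (1 / ((n:ℝ) + 1) ^ 2)) := by
    apply Summable.mul_left
    have := (summable_nat_add_iff 1).mpr
      ((Real.summable_one_div_nat_pow (p := 2)).mpr one_lt_two)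
    simpa using this
  apply Summable.of_nonneg_of_le (fun n => abs_nonneg _) _ S2
  intro n
  have hk0 : (0:ℝ) ≤ (k:ℝ) := Nat.cast_nonneg k
  have hn0 : (0:ℝ) ≤ (n:ℝ) := Nat.cast_nonneg n
  have hq := q_as_h β hβ k hk (n + 1)
  have hh := hZeil_le_zero β hβ k (n + 1)
  have hhpos := hZeil_pos β hβ k (n + 1)
  push_cast at hq
  have hden : (0:ℝ) < (2 * ((n:ℝ)+1) - 1) * ((k:ℝ) + 2 * ((n:ℝ)+1) - 1) *
      (2 * β + (k:ℝ) + 2 * ((n:ℝ)+1) + 1) * (β + (k:ℝ) + ((n:ℝ)+1)) := by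
    have f1 : (0:ℝ) < 2 * ((n:ℝ)+1) - 1 := by linarith
    have f2 : (0:ℝ) < (k:ℝ) + 2 * ((n:ℝ)+1) - 1 := by linarith
    have f3 : (0:ℝ) < 2 * β + (k:ℝ) + 2 * ((n:ℝ)+1) + 1 := by linarith
    have f4 : (0:ℝ) < β + (k:ℝ) + ((n:ℝ)+1) := by linarith
    exact mul_pos (mul_pos (mul_pos f1 f2) f3) f4
  have hspos : (0:ℝ) < (β + (k:ℝ) + 2 * ((n:ℝ)+1)) / ((2 * ((n:ℝ)+1) - 1) *
      ((k:ℝ) + 2 * ((n:ℝ)+1) - 1) * (2 * β + (k:ℝ) + 2 * ((n:ℝ)+1) + 1) *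
      (β + (k:ℝ) + ((n:ℝ)+1))) := by
    apply div_pos (by nlinarith) hden
  have hqpos : 0 < qZeil β k (n + 1) := by
    rw [hq]; exact mul_pos hspos hhpos
  rw [abs_of_pos hqpos, hq]
  have hs_le : (β + (k:ℝ) + 2 * ((n:ℝ)+1)) / ((2 * ((n:ℝ)+1) - 1) *
      ((k:ℝ) + 2 * ((n:ℝ)+1) - 1) * (2 * β + (k:ℝ) + 2 * ((n:ℝ)+1) + 1) *
      (β + (k:ℝ) + ((n:ℝ)+1))) ≤ 1 / ((n:ℝ) + 1) ^ 2 := by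
    rw [div_le_div_iff₀ hden (by positivity)]
    have e1 : ((n:ℝ)+1) * ((n:ℝ)+1) ≤ (2 * ((n:ℝ)+1) - 1) * ((k:ℝ) + 2 * ((n:ℝ)+1) - 1) := by
      nlinarith
    have e2 : (β + (k:ℝ) + 2 * ((n:ℝ)+1)) ≤ 2 * β + (k:ℝ) + 2 * ((n:ℝ)+1) + 1 := by linarith
    have e3 : (1:ℝ) ≤ β + (k:ℝ) + ((n:ℝ)+1) := by linarith
    have big : (β + (k:ℝ) + 2 * ((n:ℝ)+1)) * (((n:ℝ)+1) * ((n:ℝ)+1))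
        ≤ (2 * β + (k:ℝ) + 2 * ((n:ℝ)+1) + 1) *
          ((2 * ((n:ℝ)+1) - 1) * ((k:ℝ) + 2 * ((n:ℝ)+1) - 1)) :=
      mul_le_mul e2 e1 (by positivity) (by linarith)
    have big2 : (2 * β + (k:ℝ) + 2 * ((n:ℝ)+1) + 1) *
          ((2 * ((n:ℝ)+1) - 1) * ((k:ℝ) + 2 * ((n:ℝ)+1) - 1))
        ≤ (2 * β + (k:ℝ) + 2 * ((n:ℝ)+1) + 1) *
          ((2 * ((n:ℝ)+1) - 1) * ((k:ℝ) + 2 * ((n:ℝ)+1) - 1)) * (β + (k:ℝ) + ((n:ℝ)+1)) :=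
      le_mul_of_one_le_right (by nlinarith) e3
    nlinarith [big, big2]
  calc (β + (k:ℝ) + 2 * ((n:ℝ)+1)) / ((2 * ((n:ℝ)+1) - 1) *
      ((k:ℝ) + 2 * ((n:ℝ)+1) - 1) * (2 * β + (k:ℝ) + 2 * ((n:ℝ)+1) + 1) *
      (β + (k:ℝ) + ((n:ℝ)+1))) * hZeil β k (n+1)
      ≤ (1 / ((n:ℝ) + 1) ^ 2) * hZeil β k 0 := by
        apply mul_le_mul hs_le hh hhpos.le (by positivity)
    _ = hZeil β k 0 * (1 / ((n:ℝ) + 1) ^ 2) := by ring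

/-- The certificate tends to zero. -/
lemma gZeil_tendsto (β : ℝ) (hβ : 0 < β) (k : ℕ) :
    Filter.Tendsto (fun l : ℕ => gZeil β k l) Filter.atTop (nhds 0) := by
  have h0pos := hZeil_pos β hβ k 0
  apply squeeze_zero_norm' (a := fun l : ℕ => hZeil β k 0 / (l:ℝ))
  · filter_upwards [Filter.eventually_ge_atTop 1] with l hl
    have hl1 : (1:ℝ) ≤ (l:ℝ) := by exact_mod_cast hl
    have hk0 : (0:ℝ) ≤ (k:ℝ) := Nat.cast_nonneg k
    have hh := hZeil_le_zero β hβ k l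
    have hhpos := hZeil_pos β hβ k l
    have hden : (0:ℝ) < (2 * (l:ℝ) - 1) * (2 * β + (k:ℝ) + 2 * (l:ℝ) + 1) *
        (β + (k:ℝ) + (l:ℝ)) := by
      have f1 : (0:ℝ) < 2 * (l:ℝ) - 1 := by linarith
      have f2 : (0:ℝ) < 2 * β + (k:ℝ) + 2 * (l:ℝ) + 1 := by linarith
      have f3 : (0:ℝ) < β + (k:ℝ) + (l:ℝ) := by linarith
      exact mul_pos (mul_pos f1 f2) f3
    rw [Real.norm_eq_abs]
    unfold gZeil
    rw [abs_div, abs_of_pos hden]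
    rw [abs_of_nonpos (by nlinarith : -(l:ℝ) * hZeil β k l ≤ 0)]
    rw [div_le_div_iff₀ hden (by linarith)]
    have d1 : (l:ℝ) * 1 ≤ (2 * (l:ℝ) - 1) * (2 * β + (k:ℝ) + 2 * (l:ℝ) + 1) :=
      mul_le_mul (by linarith) (by linarith) (by norm_num) (by linarith)
    have dd : (l:ℝ) * 1 * (l:ℝ) ≤ (2 * (l:ℝ) - 1) * (2 * β + (k:ℝ) + 2 * (l:ℝ) + 1) *
        (β + (k:ℝ) + (l:ℝ)) :=
      mul_le_mul d1 (by linarith) (by linarith) (by nlinarith)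
    have hml : hZeil β k l * ((l:ℝ) * (l:ℝ)) ≤ hZeil β k 0 * ((l:ℝ) * (l:ℝ)) :=
      mul_le_mul_of_nonneg_right hh (by positivity)
    nlinarith [mul_le_mul_of_nonneg_left dd h0pos.le]
  · simpa using tendsto_const_div_atTop_nhds_zero_nat (hZeil β k 0)

/-- `Σ_l q(β,k,l)` converges absolutely, and writing `Q(β,k)` for its sum,
`Q(β+1,k) = ((2β+k+1)/(4(2β+k+4))) Q(β,k)`. -/
theorem q_sum_recurrence_beta (β : ℝ) (hβ : 0 < β) (k : ℕ) (hk : k ≠ 1) :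
    Summable (fun l : ℕ => |qZeil β k l|) ∧
    (∑' l : ℕ, qZeil (β + 1) k l)
      = ((2 * β + (k : ℝ) + 1) / (4 * (2 * β + (k : ℝ) + 4))) * ∑' l : ℕ, qZeil β k l := by
  have hS0 := summable_abs_q β hβ k hk
  have hS1 := summable_abs_q (β + 1) (by linarith) k hk
  refine ⟨hS0, ?_⟩
  have hsum0 : Summable (fun l : ℕ => qZeil β k l) := hS0.of_abs
  have hsum1 : Summable (fun l : ℕ => qZeil (β + 1) k l) := hS1.of_abs
  have T0 := hsum0.hasSum.tendsto_sum_nat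
  have T1 := hsum1.hasSum.tendsto_sum_nat
  have hcomb : Filter.Tendsto
      (fun N => ∑ l ∈ Finset.range N,
        (4 * (2 * β + (k:ℝ) + 4) * qZeil (β + 1) k l - (2 * β + (k:ℝ) + 1) * qZeil β k l))
      Filter.atTop
      (nhds (4 * (2 * β + (k:ℝ) + 4) * (∑' l, qZeil (β + 1) k l)
        - (2 * β + (k:ℝ) + 1) * (∑' l, qZeil β k l))) := by
    have := ((T1.const_mul (4 * (2 * β + (k:ℝ) + 4))).sub
      (T0.const_mul (2 * β + (k:ℝ) + 1)))
    convert this using 2 with N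
    rw [Finset.sum_sub_distrib, Finset.mul_sum, Finset.mul_sum]
  have hcomb' : Filter.Tendsto
      (fun N => ∑ l ∈ Finset.range N,
        (4 * (2 * β + (k:ℝ) + 4) * qZeil (β + 1) k l - (2 * β + (k:ℝ) + 1) * qZeil β k l))
      Filter.atTop (nhds 0) := by
    have heq : ∀ N, (∑ l ∈ Finset.range N,
        (4 * (2 * β + (k:ℝ) + 4) * qZeil (β + 1) k l - (2 * β + (k:ℝ) + 1) * qZeil β k l))
        = gZeil β k N := by
      intro N
      calc ∑ l ∈ Finset.range N,
          (4 * (2 * β + (k:ℝ) + 4) * qZeil (β + 1) k l - (2 * β + (k:ℝ) + 1) * qZeil β k l)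
          = ∑ l ∈ Finset.range N, (gZeil β k (l+1) - gZeil β k l) := by
            apply Finset.sum_congr rfl
            intro l _
            exact tele β hβ k hk l
        _ = gZeil β k N - gZeil β k 0 := Finset.sum_range_sub _ _
        _ = gZeil β k N := by rw [gZeil_zero]; ring
    simp_rw [heq]
    exact gZeil_tendsto β hβ k
  have hzero : 4 * (2 * β + (k:ℝ) + 4) * (∑' l, qZeil (β + 1) k l)
      - (2 * β + (k:ℝ) + 1) * (∑' l, qZeil β k l) = 0 :=
    tendsto_nhds_unique hcomb hcomb'
  have hk0 : (0:ℝ) ≤ (k:ℝ) := Nat.cast_nonneg k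
  have hne : (4 * (2 * β + (k:ℝ) + 4)) ≠ 0 := by positivity
  field_simp
  linarith
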